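/- Let S be a finite set, P : S × S → [0,1] a stochastic matrix, s ∈ S, and H ⊆ S^+ a set of nonempty finite words over S such that every word in H has last letter s. If μ_s({x ∈ S^ω : some nonempty finite prefix of x belongs to H}) = 1, then for every n ≥ 1, μ_s({x ∈ S^ω : some finite prefix of x is a concatenation of n words from H}) = 1. -/

import Mathlib

/-- The probability of the path `s, w₁, w₂, …, wₙ` in a Markov chain with
transition matrix `P`: the product `P(s,w₁) ⬝ P(w₁,w₂) ⋯ P(wₙ₋₁,wₙ)`. -/
def pathProb {S : Type*} (P : S → S → ℝ) : S → List S → ℝ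
  | _, [] => 1
  | s, t :: w => P s t * pathProb P t w

/-- The length-`n` prefix of an infinite word. -/
def prefixList {S : Type*} (x : ℕ → S) (n : ℕ) : List S :=
  List.ofFn fun i : Fin n => x i

/-- `μ` is the law `μ_s` of the trajectory of the Markov chain `P` started according
to `P(s,·)`: the measure of every cylinder is the corresponding path probability. -/
def IsMarkovLaw {S : Type*} [MeasurableSpace S]
    (P : S → S → ℝ) (s : S) (μ : MeasureTheory.Measure (ℕ → S)) : Prop :=
  ∀ w : List S, μ { x : ℕ → S | prefixList x w.length = w } = ENNReal.ofReal (pathProb P s w)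

open MeasureTheory Set

namespace Stmt8Aux

variable {S : Type*}

/-- Cylinder set. -/
def cyl (w : List S) : Set (ℕ → S) := {x | prefixList x w.length = w}

theorem prefixList_length (x : ℕ → S) (n : ℕ) : (prefixList x n).length = n := by
  simp [prefixList]

theorem prefixList_add (x : ℕ → S) (m k : ℕ) :
    prefixList x (m + k) = prefixList x m ++ prefixList (fun i => x (i + m)) k := by
  simp only [prefixList]
  rw [List.ofFn_add]
  congr 1
  all_goals exact congrArg List.ofFn (funext fun i => by simp [add_comm])

theorem prefixList_take (x : ℕ → S) {m n : ℕ} (h : m ≤ n) :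
    (prefixList x n).take m = prefixList x m := by
  obtain ⟨k, rfl⟩ := Nat.exists_eq_add_of_le h
  rw [prefixList_add]
  exact List.take_left' (prefixList_length x m)

theorem mem_cyl_iff {w : List S} {x : ℕ → S} :
    x ∈ cyl w ↔ ∀ i : Fin w.length, x i = w[(i : ℕ)] := by
  constructor
  · intro h i
    have hi : (i : ℕ) < (prefixList x w.length).length := by
      rw [prefixList_length]; exact i.isLt
    have h1 : (prefixList x w.length)[(i : ℕ)]'hi = x i := by simp [prefixList]
    have h2 := List.getElem_of_eq h hi
    rw [h1] at h2
    exact h2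
  · intro h
    apply List.ext_getElem (prefixList_length x w.length)
    intro i h1 h2
    simp only [prefixList, List.getElem_ofFn]
    exact h ⟨i, h2⟩

theorem cyl_nil : cyl ([] : List S) = univ := by
  ext x; simp [cyl, prefixList]

theorem cyl_inter_shift (v w : List S) :
    cyl v ∩ (fun (x : ℕ → S) (i : ℕ) => x (i + v.length)) ⁻¹' (cyl w) = cyl (v ++ w) := by
  ext x
  simp only [cyl, mem_inter_iff, mem_preimage, mem_setOf_eq, List.length_append]
  rw [prefixList_add]
  constructor
  · rintro ⟨h1, h2⟩; rw [h1, h2]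
  · intro h
    obtain ⟨h1, h2⟩ := List.append_inj h (by rw [prefixList_length])
    exact ⟨h1, h2⟩

theorem measurableSet_cyl [MeasurableSpace S] [MeasurableSingletonClass S] (w : List S) :
    MeasurableSet (cyl w) := by
  have : cyl w = ⋂ i : Fin w.length, (fun x : ℕ → S => x (i : ℕ)) ⁻¹' {w[(i : ℕ)]} := by
    ext x; simp [mem_cyl_iff]
  rw [this]
  exact MeasurableSet.iInter fun i => (measurable_pi_apply _) (measurableSet_singleton _)

theorem isPiSystem_cyl : IsPiSystem {A : Set (ℕ → S) | ∃ w : List S, A = cyl w} := by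
  have key : ∀ (a b : List S) (x : ℕ → S), a.length ≤ b.length → x ∈ cyl a → x ∈ cyl b →
      cyl a ∩ cyl b = cyl b := by
    intro a b x hlen hxa hxb
    have ha' : prefixList x a.length = a := hxa
    have hb' : prefixList x b.length = b := hxb
    rw [Set.inter_eq_right]
    intro y hy
    have hy' : prefixList y b.length = b := hy
    have hab : b.take a.length = a := by
      rw [← hb', prefixList_take x hlen]; exact ha'
    show prefixList y a.length = a
    have h3 : prefixList y a.length = (prefixList y b.length).take a.length :=
      (prefixList_take y hlen).symm
    rw [h3, hy', hab]
  rintro A ⟨v, rfl⟩ B ⟨w, rfl⟩ hne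
  obtain ⟨x, hxv, hxw⟩ := hne
  rcases le_total v.length w.length with h | h
  · rw [key v w x h hxv hxw]; exact ⟨w, rfl⟩
  · rw [Set.inter_comm, key w v x h hxw hxv]; exact ⟨v, rfl⟩

theorem generate_cyl [Fintype S] [MeasurableSpace S] [MeasurableSingletonClass S] :
    MeasurableSpace.generateFrom {A : Set (ℕ → S) | ∃ w : List S, A = cyl w}
      = (inferInstance : MeasurableSpace (ℕ → S)) := by
  apply le_antisymm
  · rw [MeasurableSpace.generateFrom_le_iff]
    rintro A ⟨w, rfl⟩
    exact measurableSet_cyl w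
  · show MeasurableSpace.pi ≤ _
    rw [MeasurableSpace.pi]
    apply iSup_le
    intro i
    rintro A ⟨B, _, rfl⟩
    have hrep : (fun x : ℕ → S => x i) ⁻¹' B
        = ⋃ w ∈ {w : List S | w.length = i + 1 ∧ ∃ t ∈ B, w.getLast? = some t}, cyl w := by
      ext x
      simp only [mem_preimage, mem_iUnion, mem_setOf_eq, exists_prop]
      constructor
      · intro hx
        refine ⟨prefixList x (i + 1), ⟨prefixList_length x (i + 1), x i, hx, ?_⟩, ?_⟩
        · rw [prefixList_add, show prefixList (fun j => x (j + i)) 1 = [x i] by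
            simp [prefixList, List.ofFn_succ]]
          exact List.getLast?_concat
        · show prefixList x (prefixList x (i+1)).length = _
          rw [prefixList_length]
      · rintro ⟨w, ⟨hlen, t, htB, hlast⟩, hx⟩
        have hx' : prefixList x (i + 1) = w := by
          have : prefixList x w.length = w := hx
          rwa [hlen] at this
        rw [← hx', prefixList_add, show prefixList (fun j => x (j + i)) 1 = [x i] by
            simp [prefixList, List.ofFn_succ], List.getLast?_concat] at hlast
        have hxi : x i = t := by injection hlast
        rw [hxi]; exact htB
    rw [hrep]
    refine MeasurableSet.biUnion (Set.to_countable _) fun w _ =>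
      MeasurableSpace.measurableSet_generateFrom ⟨w, rfl⟩

theorem pathProb_nonneg {P : S → S → ℝ} (hP0 : ∀ s t, 0 ≤ P s t) :
    ∀ (w : List S) (s : S), 0 ≤ pathProb P s w
  | [], _ => by norm_num [pathProb]
  | t :: w, s => mul_nonneg (hP0 s t) (pathProb_nonneg hP0 w t)

theorem pathProb_append {P : S → S → ℝ} :
    ∀ (v : List S) (s : S) (w : List S),
      pathProb P s (v ++ w) = pathProb P s v * pathProb P (v.getLastD s) w
  | [], s, w => by simp [pathProb]
  | t :: v, s, w => by
    rw [List.cons_append]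
    show P s t * pathProb P t (v ++ w) = (P s t * pathProb P t v) * pathProb P ((t :: v).getLastD s) w
    rw [pathProb_append v t w, List.getLastD_cons]
    ring

/-- The Markov property: conditioned on a cylinder whose word ends in `s`, the shifted
process has law `μ` again. -/
theorem markov [Fintype S] [MeasurableSpace S] [MeasurableSingletonClass S]
    {P : S → S → ℝ} (hP0 : ∀ s t, 0 ≤ P s t) {s : S} {μ : Measure (ℕ → S)}
    (hμ : IsMarkovLaw P s μ) {v : List S} (hv : v.getLast? = some s)
    {B : Set (ℕ → S)} (hB : MeasurableSet B) :
    μ (cyl v ∩ (fun (x : ℕ → S) (i : ℕ) => x (i + v.length)) ⁻¹' B)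
      = ENNReal.ofReal (pathProb P s v) * μ B := by
  have hshift : Measurable (fun (x : ℕ → S) (i : ℕ) => x (i + v.length)) :=
    measurable_pi_iff.mpr fun i => measurable_pi_apply _
  have huniv : μ univ = 1 := by
    have h := hμ []
    simp only [List.length_nil, pathProb, ENNReal.ofReal_one] at h
    rw [← h]
    congr 1
    ext x; simp [prefixList]
  haveI : IsFiniteMeasure μ := ⟨by rw [huniv]; exact ENNReal.one_lt_top⟩
  have hcylapp : ∀ w : List S, μ (cyl w) = ENNReal.ofReal (pathProb P s w) := hμ
  have hgetD : v.getLastD s = s := by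
    rw [List.getLastD_eq_getLast?, hv]; rfl
  set sh := fun (x : ℕ → S) (i : ℕ) => x (i + v.length) with hsh
  have happly : ∀ {C : Set (ℕ → S)}, MeasurableSet C →
      ((μ.restrict (cyl v)).map sh) C = μ (cyl v ∩ sh ⁻¹' C) := by
    intro C hC
    rw [Measure.map_apply hshift hC, Measure.restrict_apply (hshift hC), Set.inter_comm]
  have heq : (μ.restrict (cyl v)).map sh = ENNReal.ofReal (pathProb P s v) • μ := by
    refine ext_of_generate_finite _ generate_cyl.symm isPiSystem_cyl ?_ ?_
    · rintro A ⟨w, rfl⟩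
      rw [happly (measurableSet_cyl w), cyl_inter_shift, Measure.smul_apply, smul_eq_mul,
        hcylapp, hcylapp, pathProb_append, hgetD,
        ENNReal.ofReal_mul (pathProb_nonneg hP0 v s)]
    · rw [happly MeasurableSet.univ, Set.preimage_univ, Set.inter_univ,
        Measure.smul_apply, smul_eq_mul, huniv, mul_one]
      exact hcylapp v
  calc μ (cyl v ∩ sh ⁻¹' B) = ((μ.restrict (cyl v)).map sh) B := (happly hB).symm
    _ = ENNReal.ofReal (pathProb P s v) * μ B := by
        rw [heq, Measure.smul_apply, smul_eq_mul]

theorem getLast?_flatten {s : S} :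
    ∀ (ws : List (List S)), ws ≠ [] → (∀ w ∈ ws, w.getLast? = some s) →
      ws.flatten.getLast? = some s
  | [], hne, _ => absurd rfl hne
  | [w], _, h => by simpa using h w (by simp)
  | w :: w' :: ws', _, h => by
    have htail : (w' :: ws').flatten.getLast? = some s :=
      getLast?_flatten (w' :: ws') (by simp) fun u hu => h u (List.mem_cons_of_mem _ hu)
    rw [List.flatten_cons, List.getLast?_append_of_ne_nil]
    · exact htail
    · intro hnil; rw [hnil] at htail; simp at htail

end Stmt8Aux

open Stmt8Aux

theorem stmt8 {S : Type*} [Fintype S] [MeasurableSpace S] [MeasurableSingletonClass S]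
    (P : S → S → ℝ) (hP0 : ∀ s t, 0 ≤ P s t) (hP1 : ∀ s, ∑ t, P s t = 1)
    (s : S) (μ : MeasureTheory.Measure (ℕ → S)) (hμ : IsMarkovLaw P s μ)
    (H : Set (List S)) (hH : ∀ w ∈ H, w.getLast? = some s)
    (hone : μ { x : ℕ → S | ∃ k > 0, prefixList x k ∈ H } = 1) :
    ∀ n ≥ 1, μ { x : ℕ → S | ∃ ws : List (List S), ws.length = n ∧
        (∀ w ∈ ws, w ∈ H) ∧ ∃ k, prefixList x k = ws.flatten } = 1 := by
  have huniv : μ univ = 1 := by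
    have h := hμ []
    simp only [List.length_nil, pathProb, ENNReal.ofReal_one] at h
    rw [← h]; congr 1; ext x; simp [prefixList]
  have hle1 : ∀ T : Set (ℕ → S), μ T ≤ 1 := fun T =>
    le_trans (measure_mono (subset_univ T)) huniv.le
  have hHne : ∀ w ∈ H, w ≠ [] := by
    intro w hw hnil
    have := hH w hw
    rw [hnil] at this
    simp at this
  set E := { x : ℕ → S | ∃ k > 0, prefixList x k ∈ H } with hEdef
  have hErep : E = ⋃ w ∈ H, cyl w := by
    ext x
    simp only [hEdef, mem_setOf_eq, mem_iUnion, exists_prop]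
    constructor
    · rintro ⟨k, hk, hw⟩
      refine ⟨prefixList x k, hw, ?_⟩
      show prefixList x (prefixList x k).length = _
      rw [prefixList_length]
    · rintro ⟨w, hwH, hx⟩
      refine ⟨w.length, ?_, ?_⟩
      · exact List.length_pos_iff.mpr (hHne w hwH)
      · show prefixList x w.length ∈ H
        rw [show prefixList x w.length = w from hx]
        exact hwH
  have hE : MeasurableSet E := by
    rw [hErep]
    exact MeasurableSet.biUnion (Set.to_countable _) fun w _ => measurableSet_cyl w
  have hEc : μ Eᶜ = 0 := by
    rw [measure_compl hE (lt_of_le_of_lt (hle1 E) ENNReal.one_lt_top).ne, huniv, hone,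
      tsub_self]
  intro n hn
  induction n, hn using Nat.le_induction with
  | base =>
    refine le_antisymm (hle1 _) ?_
    rw [← hone]
    apply measure_mono
    rintro x ⟨k, hk, hw⟩
    refine ⟨[prefixList x k], rfl, ?_, k, ?_⟩
    · intro w hw'
      rw [List.mem_singleton] at hw'
      rw [hw']; exact hw
    · simp
  | succ n hn ih =>
    set A : ℕ → Set (ℕ → S) := fun m => { x : ℕ → S | ∃ ws : List (List S), ws.length = m ∧
        (∀ w ∈ ws, w ∈ H) ∧ ∃ k, prefixList x k = ws.flatten } with hAdef
    show μ (A (n + 1)) = 1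
    have hAn : μ (A n) = 1 := ih
    set Flat : Set (List S) :=
      {v | ∃ ws : List (List S), ws.length = n ∧ (∀ w ∈ ws, w ∈ H) ∧ ws.flatten = v} with hFdef
    set D : Set (ℕ → S) :=
      ⋃ v ∈ Flat, (cyl v ∩ (fun (x : ℕ → S) (i : ℕ) => x (i + v.length)) ⁻¹' Eᶜ) with hDdef
    have hsub : A n ⊆ A (n + 1) ∪ D := by
      rintro x ⟨ws, hlen, hmem, k, hpre⟩
      have hk : k = ws.flatten.length := by rw [← hpre, prefixList_length]
      subst hk
      by_cases hsh : (fun (i : ℕ) => x (i + ws.flatten.length)) ∈ E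
      · left
        obtain ⟨k', hk', hw'⟩ := hsh
        refine ⟨ws ++ [prefixList (fun i => x (i + ws.flatten.length)) k'],
          by simp [hlen], ?_, ws.flatten.length + k', ?_⟩
        · intro w hw
          rw [List.mem_append, List.mem_singleton] at hw
          rcases hw with hw | hw
          · exact hmem w hw
          · rw [hw]; exact hw'
        · rw [prefixList_add, hpre, List.flatten_append]
          simp
      · right
        refine mem_biUnion ⟨ws, hlen, hmem, rfl⟩ ⟨hpre, hsh⟩
    have hD : μ D = 0 := by
      rw [hDdef, measure_biUnion_null_iff (Set.to_countable _)]
      rintro v ⟨ws, hlen, hmem, rfl⟩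
      have hne : ws ≠ [] := by
        intro h; rw [h] at hlen; simp at hlen; omega
      have hvlast : ws.flatten.getLast? = some s :=
        getLast?_flatten ws hne fun w hw => hH w (hmem w hw)
      rw [markov hP0 hμ hvlast hE.compl, hEc, mul_zero]
    refine le_antisymm (hle1 _) ?_
    calc (1 : ENNReal) = μ (A n) := hAn.symm
      _ ≤ μ (A (n + 1) ∪ D) := measure_mono hsub
      _ ≤ μ (A (n + 1)) + μ D := measure_union_le _ _
      _ = μ (A (n + 1)) := by rw [hD, add_zero]
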